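/- Let (X,d) be a complete locally compact metric space, μ a nonnegative σ-finite Radon measure on X, and G a topological group acting on X by homeomorphisms preserving μ-nullsets, such that the action is properly discontinuous and free (every point has trivial stabilizer), and there exists a compact K ⊂ X with GK = X. Then there exists a precompact Borel set B ⊂ X with μ(∂B) = 0 such that GB = X and gB ∩ B = ∅ for all g ∈ G with g ≠ 1. -/

import Mathlib

open MeasureTheory Filter Topology Set Pointwise ENNReal

/-- Properly discontinuous action. -/
def ProperlyDisc (G : Type*) (X : Type*) [SMul G X] [TopologicalSpace X] : Prop :=
  ∀ K : Set X, IsCompact K → {g : G | (g • K) ∩ K ≠ ∅}.Finite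

/-- **Lemma A.1 (free case).** If moreover the action of `G` on `X` is free, the
fundamental domain `B` can be chosen so that `GB = X` and `gB ∩ B = ∅` for all
`g ≠ 1`. -/
theorem exists_strict_fundamental_domain_of_free
    {X : Type*} [MetricSpace X] [CompleteSpace X] [LocallyCompactSpace X]
    [MeasurableSpace X] [BorelSpace X]
    (μ : Measure X) [SigmaFinite μ] [μ.Regular]
    {G : Type*} [Group G] [TopologicalSpace G] [IsTopologicalGroup G] [MulAction G X]
    (hcont : ∀ g : G, Continuous fun x : X => g • x)
    (hnull : ∀ (g : G) (N : Set X), μ N = 0 → μ (g • N) = 0)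
    (hPD : ProperlyDisc G X)
    (hfree : ∀ (g : G) (x : X), g • x = x → g = 1)
    (K : Set X) (hK : IsCompact K) (hKX : (⋃ g : G, g • K) = Set.univ) :
    ∃ B : Set X, MeasurableSet B ∧ IsCompact (closure B) ∧
      μ (frontier B) = 0 ∧
      (⋃ g : G, g • B) = Set.univ ∧
      ∀ g : G, g ≠ 1 → (g • B) ∩ B = ∅ := by
  classical
  haveI : ContinuousConstSMul G X := ⟨hcont⟩
  -- Step 1: around every point there is a small open set with null frontier,
  -- compact closure, that is disjoint from all its nontrivial translates.
  have step1 : ∀ x : X, ∃ U : Set X, x ∈ U ∧ IsOpen U ∧ IsCompact (closure U) ∧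
      μ (frontier U) = 0 ∧ ∀ g : G, g ≠ 1 → (g • U) ∩ U = ∅ := by
    intro x
    obtain ⟨r₀, hr₀pos, hr₀⟩ := Metric.exists_isCompact_closedBall x
    have hF : {g : G | (g • Metric.closedBall x r₀) ∩ Metric.closedBall x r₀ ≠ ∅}.Finite :=
      hPD _ hr₀
    set F : Finset G := hF.toFinset.erase 1 with hFdef
    have hdelta : ∀ g ∈ F, ∃ δ : ℝ, 0 < δ ∧ δ ≤ dist (g • x) x / 3 ∧
        ∀ y : X, dist y x < δ → dist (g • y) (g • x) < dist (g • x) x / 3 := by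
      intro g hg
      have hg1 : g ≠ 1 := (Finset.mem_erase.mp hg).1
      have hD : 0 < dist (g • x) x := by
        rw [dist_pos]
        intro h
        exact hg1 (hfree g x h)
      have hc := (hcont g).continuousAt (x := x)
      rw [Metric.continuousAt_iff] at hc
      obtain ⟨δ, hδpos, hδ⟩ := hc (dist (g • x) x / 3) (by linarith)
      exact ⟨min δ (dist (g • x) x / 3), lt_min hδpos (by linarith),
        min_le_right _ _, fun y hy => hδ (lt_of_lt_of_le hy (min_le_left _ _))⟩
    choose! δ hδpos hδle hδ using hdelta
    set r₁ : ℝ := if h : F.Nonempty then min r₀ (F.inf' h δ) else r₀ with hr₁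
    have hr₁pos : 0 < r₁ := by
      rw [hr₁]
      split
      · next h =>
        refine lt_min hr₀pos ?_
        rw [Finset.lt_inf'_iff]
        intro g hg
        exact hδpos g hg
      · exact hr₀pos
    have hr₁r₀ : r₁ ≤ r₀ := by
      rw [hr₁]; split
      · exact min_le_left _ _
      · exact le_rfl
    have hr₁δ : ∀ g ∈ F, r₁ ≤ δ g := by
      intro g hg
      rw [hr₁, dif_pos ⟨g, hg⟩]
      exact (min_le_right _ _).trans (Finset.inf'_le _ hg)
    obtain ⟨r, hrIoo, hrnull⟩ := exists_null_frontier_thickening μ {x} hr₁pos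
    rw [Metric.thickening_singleton] at hrnull
    have hrr₀ : r ≤ r₀ := le_trans hrIoo.2.le hr₁r₀
    have hball : Metric.ball x r ⊆ Metric.closedBall x r₀ :=
      Metric.ball_subset_closedBall.trans (Metric.closedBall_subset_closedBall hrr₀)
    refine ⟨Metric.ball x r, Metric.mem_ball_self hrIoo.1, Metric.isOpen_ball, ?_, hrnull, ?_⟩
    · exact hr₀.of_isClosed_subset isClosed_closure
        (closure_minimal hball Metric.isClosed_closedBall)
    · intro g hg1
      by_cases hgF : g ∈ F
      · rw [Set.eq_empty_iff_forall_notMem]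
        rintro z ⟨⟨y, hy, rfl⟩, hz⟩
        have hrδ : r < δ g := lt_of_lt_of_le hrIoo.2 (hr₁δ g hgF)
        have h1 : dist (g • y) (g • x) < dist (g • x) x / 3 :=
          hδ g hgF y (lt_trans (Metric.mem_ball.mp hy) hrδ)
        have h2 : dist (g • y) x < dist (g • x) x / 3 :=
          lt_of_lt_of_le (Metric.mem_ball.mp hz)
            ((hrIoo.2.le.trans (hr₁δ g hgF)).trans (hδle g hgF))
        have hD : 0 < dist (g • x) x := by
          rw [dist_pos]
          intro h
          exact hg1 (hfree g x h)
        have htri := dist_triangle (g • x) (g • y) x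
        rw [dist_comm (g • x) (g • y)] at htri
        linarith
      · have hemp : (g • Metric.closedBall x r₀) ∩ Metric.closedBall x r₀ = ∅ := by
          by_contra h
          exact hgF (Finset.mem_erase.mpr ⟨hg1, hF.mem_toFinset.mpr h⟩)
        apply Set.eq_empty_of_subset_empty
        rw [← hemp]
        exact Set.inter_subset_inter (Set.smul_set_mono hball) hball
  choose U hUmem hUopen hUcpt hUnull hUdisj using step1
  -- Step 2: finite subcover of K
  obtain ⟨t, ht⟩ := hK.elim_finite_subcover U hUopen
    (fun x hx => Set.mem_iUnion.mpr ⟨x, hUmem x⟩)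
  set n := Fintype.card ↥t with hn
  set e : ↥t ≃ Fin n := Fintype.equivFin ↥t with he
  set Uf : Fin n → Set X := fun i => U ((e.symm i : ↥t) : X) with hUf
  have hcover : K ⊆ ⋃ i, Uf i := by
    intro x hx
    obtain ⟨y, hyt, hxy⟩ := Set.mem_iUnion₂.mp (ht hx)
    refine Set.mem_iUnion.mpr ⟨e ⟨y, hyt⟩, ?_⟩
    simpa [hUf, Equiv.symm_apply_apply] using hxy
  -- Step 3: the fundamental domain
  set W : Fin n → Set X := fun j => ⋃ g : G, g • Uf j with hW
  have hWopen : ∀ j, IsOpen (W j) := fun j => isOpen_iUnion fun g => (hUopen _).smul g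
  set WW : Fin n → Set X := fun i => ⋃ j : {j : Fin n // j < i}, W j.1 with hWW
  have hWWopen : ∀ i, IsOpen (WW i) := fun i => isOpen_iUnion fun j => hWopen j.1
  set V : Fin n → Set X := fun i => Uf i \ WW i with hV
  set B : Set X := ⋃ i : Fin n, V i with hB
  have hVU : ∀ i, V i ⊆ Uf i := fun i => Set.diff_subset
  have hmeas : MeasurableSet B :=
    MeasurableSet.iUnion fun i =>
      ((hUopen _).measurableSet).diff (hWWopen i).measurableSet
  -- compactness of the closure
  have hcpt : IsCompact (closure B) := by
    have hsub : closure B ⊆ ⋃ i : Fin n, closure (Uf i) := by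
      rw [hB, closure_iUnion_of_finite]
      exact Set.iUnion_mono fun i => closure_mono (hVU i)
    exact (isCompact_iUnion fun i => hUcpt _).of_isClosed_subset isClosed_closure hsub
  -- covering property
  have hGB : (⋃ g : G, g • B) = Set.univ := by
    rw [Set.eq_univ_iff_forall]
    intro x
    have hx : x ∈ ⋃ g : G, g • K := hKX ▸ Set.mem_univ x
    obtain ⟨g, hg⟩ := Set.mem_iUnion.mp hx
    have hgx : g⁻¹ • x ∈ K := by rwa [← Set.mem_smul_set_iff_inv_smul_mem]
    set S : Set (Fin n) := {i | ∃ h : G, h • x ∈ Uf i} with hS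
    have hSne : S.Nonempty := by
      obtain ⟨i, hi⟩ := Set.mem_iUnion.mp (hcover hgx)
      exact ⟨i, g⁻¹, hi⟩
    obtain ⟨i, hiS, hmin⟩ := Set.exists_min_image S id (Set.toFinite S) hSne
    obtain ⟨h, hh⟩ := hiS
    have hVmem : h • x ∈ V i := by
      refine ⟨hh, fun hmem => ?_⟩
      obtain ⟨⟨j, hji⟩, hj⟩ := Set.mem_iUnion.mp hmem
      obtain ⟨g', hg'⟩ := Set.mem_iUnion.mp hj
      have : (g'⁻¹ * h) • x ∈ Uf j := by
        rw [mul_smul]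
        rwa [← Set.mem_smul_set_iff_inv_smul_mem]
      exact absurd (hmin j ⟨g'⁻¹ * h, this⟩) (not_le.mpr hji)
    refine Set.mem_iUnion.mpr ⟨h⁻¹, ?_⟩
    rw [Set.mem_smul_set_iff_inv_smul_mem, inv_inv]
    exact Set.mem_iUnion.mpr ⟨i, hVmem⟩
  -- disjointness
  have hdisj : ∀ g : G, g ≠ 1 → (g • B) ∩ B = ∅ := by
    intro g hg1
    rw [Set.eq_empty_iff_forall_notMem]
    rintro z ⟨hz1, hz2⟩
    obtain ⟨y, hy, rfl⟩ := hz1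
    obtain ⟨i, hyi⟩ := Set.mem_iUnion.mp hy
    obtain ⟨j, hzj⟩ := Set.mem_iUnion.mp hz2
    rcases lt_trichotomy i j with hij | hij | hij
    · exact hzj.2 (Set.mem_iUnion.mpr ⟨⟨i, hij⟩,
        Set.mem_iUnion.mpr ⟨g, Set.smul_mem_smul_set hyi.1⟩⟩)
    · subst hij
      have hemp := hUdisj ((e.symm i : ↥t) : X) g hg1
      have : g • y ∈ (g • Uf i) ∩ Uf i := ⟨Set.smul_mem_smul_set hyi.1, hzj.1⟩
      rw [hUf] at this
      rw [Set.eq_empty_iff_forall_notMem] at hemp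
      exact hemp _ this
    · refine hyi.2 (Set.mem_iUnion.mpr ⟨⟨j, hij⟩, Set.mem_iUnion.mpr ⟨g⁻¹, ?_⟩⟩)
      rw [Set.mem_smul_set_iff_inv_smul_mem, inv_inv]
      exact hzj.1
  -- local finiteness of the translates of each Uf j
  have hLF : ∀ j : Fin n, LocallyFinite (fun g : G => g • Uf j) := by
    intro j x
    obtain ⟨C, hCcpt, hCmem⟩ := exists_compact_mem_nhds x
    refine ⟨C, hCmem, ?_⟩
    apply Set.Finite.subset (hPD (closure (Uf j) ∪ C) ((hUcpt _).union hCcpt))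
    rintro g ⟨z, hz1, hz2⟩
    have hz1' : z ∈ g • (closure (Uf j) ∪ C) :=
      Set.smul_set_mono (subset_closure.trans Set.subset_union_left) hz1
    exact Set.nonempty_iff_ne_empty.mp ⟨z, hz1', Set.subset_union_right hz2⟩
  have hWfrontier : ∀ j : Fin n, frontier (W j) ⊆ ⋃ g : G, g • frontier (Uf j) := by
    intro j
    have hWcl : closure (W j) = ⋃ g : G, g • closure (Uf j) := by
      rw [hW]
      simp only
      rw [(hLF j).closure_iUnion]
      simp only [closure_smul]
    rw [(hWopen j).frontier_eq, hWcl]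
    rintro z ⟨hz1, hz2⟩
    obtain ⟨g, y, hy, rfl⟩ := Set.mem_iUnion.mp hz1
    refine Set.mem_iUnion.mpr ⟨g, Set.smul_mem_smul_set ?_⟩
    rw [(hUopen _).frontier_eq]
    exact ⟨hy, fun hmem => hz2 (Set.mem_iUnion.mpr ⟨g, Set.smul_mem_smul_set hmem⟩)⟩
  -- null frontier
  have hVfrnull : ∀ i : Fin n, μ (frontier (V i)) = 0 := by
    intro i
    have hnullW : ∀ j : Fin n, μ (frontier (W j) ∩ closure (Uf i)) = 0 := by
      intro j
      set D : Set X := closure (Uf j) ∪ closure (Uf i) with hD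
      have hDcpt : IsCompact D := (hUcpt _).union (hUcpt _)
      have hFij := hPD D hDcpt
      have hsub2 : frontier (W j) ∩ closure (Uf i) ⊆
          ⋃ g ∈ {g : G | (g • D) ∩ D ≠ ∅}, g • frontier (Uf j) := by
        rintro z ⟨hz1, hz2⟩
        obtain ⟨g, hg⟩ := Set.mem_iUnion.mp (hWfrontier j hz1)
        refine Set.mem_iUnion₂.mpr ⟨g, ?_, hg⟩
        have hz1' : z ∈ g • D :=
          Set.smul_set_mono (frontier_subset_closure.trans Set.subset_union_left) hg
        exact Set.nonempty_iff_ne_empty.mp ⟨z, hz1', Set.subset_union_right hz2⟩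
      refine measure_mono_null hsub2 ?_
      rw [measure_biUnion_null_iff hFij.countable]
      intro g _
      exact hnull g _ (hUnull _)
    have hsub : frontier (V i) ⊆
        frontier (Uf i) ∪ ⋃ j : Fin n, (frontier (W j) ∩ closure (Uf i)) := by
      intro z hz
      have hzcl : z ∈ closure (Uf i) :=
        closure_mono (hVU i) (frontier_subset_closure hz)
      have hz' : z ∈ frontier (Uf i ∩ (WW i)ᶜ) := by
        rw [hV] at hz
        simpa [Set.diff_eq] using hz
      have := frontier_inter_subset (Uf i) (WW i)ᶜ hz'
      rcases this with h | h
      · exact Or.inl h.1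
      · have hzT : z ∈ frontier (WW i) := by
          rw [← frontier_compl]
          exact h.2
        have hTcl : closure (WW i) = ⋃ j : {j : Fin n // j < i}, closure (W j.1) := by
          rw [hWW]
          exact closure_iUnion_of_finite _
        rw [(hWWopen i).frontier_eq, hTcl] at hzT
        obtain ⟨⟨j, hji⟩, hj⟩ := Set.mem_iUnion.mp hzT.1
        have hzW : z ∈ frontier (W j) := by
          rw [(hWopen j).frontier_eq]
          exact ⟨hj, fun hmem => hzT.2 (Set.mem_iUnion.mpr ⟨⟨j, hji⟩, hmem⟩)⟩
        exact Or.inr (Set.mem_iUnion.mpr ⟨j, hzW, hzcl⟩)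
    refine measure_mono_null hsub (measure_union_null (hUnull _) ?_)
    exact measure_iUnion_null hnullW
  have hfrB : μ (frontier B) = 0 := by
    have hsub : frontier B ⊆ ⋃ i : Fin n, frontier (V i) := by
      intro z hz
      have hz1 : z ∈ ⋃ i : Fin n, closure (V i) := by
        rw [← closure_iUnion_of_finite]
        exact frontier_subset_closure hz
      obtain ⟨i, hi⟩ := Set.mem_iUnion.mp hz1
      refine Set.mem_iUnion.mpr ⟨i, hi, fun hmem => hz.2 ?_⟩
      exact interior_mono (Set.subset_iUnion V i) hmem
    exact measure_mono_null hsub (measure_iUnion_null hVfrnull)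
  exact ⟨B, hmeas, hcpt, hfrB, hGB, hdisj⟩
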